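/- For the stick-breaking construction with independent random variables U_k ~ Beta(1-α, θ+kα) (0 ≤ α < 1, θ > -α), the weights V_1 = U_1, V_n = (1-U_1)⋯(1-U_{n-1})U_n for n ≥ 2 are nonnegative and satisfy Σ_{n=1}^∞ V_n = 1 almost surely. -/

import Mathlib

open MeasureTheory ProbabilityTheory Set Filter
open scoped ENNReal NNReal

noncomputable def betaMeasure (a b : ℝ) : Measure ℝ :=
  volume.withDensity (fun x => ENNReal.ofReal
    ((Set.Ioo (0:ℝ) 1).indicator
      (fun x => (Real.Gamma (a + b) / (Real.Gamma a * Real.Gamma b)) *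
        x ^ (a - 1) * (1 - x) ^ (b - 1)) x))

lemma betaSetIntegral {a b : ℝ} (ha : 0 < a) (hb : 0 < b) :
    ∫ x in Set.Ioo (0:ℝ) 1, x ^ (a-1) * (1-x) ^ (b-1) =
      Real.Gamma a * Real.Gamma b / Real.Gamma (a+b) := by
  have hre_a : 0 < Complex.re (a : ℂ) := by simpa using ha
  have hre_b : 0 < Complex.re (b : ℂ) := by simpa using hb
  have hΓ := Complex.Gamma_mul_Gamma_eq_betaIntegral hre_a hre_b
  have hcoe : Complex.betaIntegral (a : ℂ) (b : ℂ) =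
      ((∫ x in Set.Ioo (0:ℝ) 1, x ^ (a-1) * (1-x) ^ (b-1) : ℝ) : ℂ) := by
    rw [Complex.betaIntegral, intervalIntegral.integral_of_le zero_le_one,
      integral_Ioc_eq_integral_Ioo]
    have : ∀ x ∈ Set.Ioo (0:ℝ) 1, (x:ℂ) ^ ((a:ℂ)-1) * (1-(x:ℂ)) ^ ((b:ℂ)-1)
        = ((x ^ (a-1) * (1-x) ^ (b-1) : ℝ) : ℂ) := by
      intro x hx
      obtain ⟨hx0, hx1⟩ := hx
      rw [Complex.ofReal_mul, Complex.ofReal_cpow hx0.le,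
        Complex.ofReal_cpow (by linarith : (0:ℝ) ≤ 1 - x)]
      push_cast
      ring
    rw [setIntegral_congr_fun measurableSet_Ioo this]; exact integral_ofReal
  rw [hcoe] at hΓ
  have hab : (a:ℂ) + b = ((a+b : ℝ) : ℂ) := by push_cast; ring
  rw [hab, Complex.Gamma_ofReal, Complex.Gamma_ofReal, Complex.Gamma_ofReal,
    ← Complex.ofReal_mul, ← Complex.ofReal_mul] at hΓ
  have h := Complex.ofReal_injective hΓ
  have hΓab : Real.Gamma (a+b) ≠ 0 := (Real.Gamma_pos_of_pos (by linarith)).ne'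
  field_simp
  linarith [h]


lemma betaDensity_meas (a b : ℝ) :
    Measurable (fun x : ℝ => ((Set.Ioo (0:ℝ) 1).indicator
      (fun x => (Real.Gamma (a + b) / (Real.Gamma a * Real.Gamma b)) *
        x ^ (a - 1) * (1 - x) ^ (b - 1)) x)) := by
  refine Measurable.indicator ?_ measurableSet_Ioo
  have h : Measurable (fun x : ℝ => 1 - x) := measurable_const.sub measurable_id
  measurability


lemma betaDensity_nonneg {a b : ℝ} (ha : 0 < a) (hb : 0 < b) (x : ℝ) :
    0 ≤ ((Set.Ioo (0:ℝ) 1).indicator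
      (fun x => (Real.Gamma (a + b) / (Real.Gamma a * Real.Gamma b)) *
        x ^ (a - 1) * (1 - x) ^ (b - 1)) x) := by
  refine Set.indicator_nonneg (fun y hy => ?_) x
  have hC : 0 < Real.Gamma (a+b) / (Real.Gamma a * Real.Gamma b) :=
    div_pos (Real.Gamma_pos_of_pos (by linarith))
      (mul_pos (Real.Gamma_pos_of_pos ha) (Real.Gamma_pos_of_pos hb))
  have h1 : (0:ℝ) < y ^ (a-1) := Real.rpow_pos_of_pos hy.1 _
  have h2 : (0:ℝ) < (1-y) ^ (b-1) := Real.rpow_pos_of_pos (by linarith [hy.2]) _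
  positivity


lemma betaMeasure_integral_id {a b : ℝ} (ha : 0 < a) (hb : 0 < b) :
    ∫ x, x ∂(_root_.betaMeasure a b) = a / (a + b) := by
  set C := Real.Gamma (a + b) / (Real.Gamma a * Real.Gamma b) with hC
  set f : ℝ → ℝ := (Set.Ioo (0:ℝ) 1).indicator
      (fun x => C * x ^ (a - 1) * (1 - x) ^ (b - 1)) with hf
  have hfm : Measurable f := betaDensity_meas a b
  have hfnn : ∀ x, 0 ≤ f x := betaDensity_nonneg ha hb
  have h1 : _root_.betaMeasure a b = volume.withDensity (fun x => ((f x).toNNReal : ENNReal)) := rfl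
  rw [h1, integral_withDensity_eq_integral_smul hfm.real_toNNReal]
  have h2 : ∀ x : ℝ, (f x).toNNReal • x = f x * x := by
    intro x
    rw [NNReal.smul_def, Real.coe_toNNReal _ (hfnn x), smul_eq_mul]
  simp only [h2]
  have h3 : ∀ x : ℝ, f x * x = (Set.Ioo (0:ℝ) 1).indicator
      (fun x => (C * x ^ (a - 1) * (1 - x) ^ (b - 1)) * x) x := by
    intro x
    by_cases hx : x ∈ Set.Ioo (0:ℝ) 1 <;> simp [hf, hx]
  simp only [h3]
  rw [integral_indicator measurableSet_Ioo]
  have h4 : ∀ x ∈ Set.Ioo (0:ℝ) 1,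
      (C * x ^ (a - 1) * (1 - x) ^ (b - 1)) * x = C * (x ^ ((a+1) - 1) * (1 - x) ^ (b - 1)) := by
    intro x hx
    have hx0 : (0:ℝ) < x := hx.1
    have : x ^ (a - 1) * x = x ^ ((a+1)-1) := by
      rw [show (a+1)-1 = (a-1) + 1 by ring, Real.rpow_add hx0, Real.rpow_one]
    rw [← this]; ring
  rw [setIntegral_congr_fun measurableSet_Ioo h4, integral_const_mul,
    betaSetIntegral (by linarith : (0:ℝ) < a+1) hb]
  have hΓa := Real.Gamma_pos_of_pos ha
  have hΓb := Real.Gamma_pos_of_pos hb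
  have hΓab := Real.Gamma_pos_of_pos (show (0:ℝ) < a+b by linarith)
  rw [hC, Real.Gamma_add_one ha.ne', show a+1+b = (a+b)+1 by ring,
    Real.Gamma_add_one (by linarith : a+b ≠ 0)]
  field_simp


theorem stick_breaking_weights_sum_one
    {Ω : Type*} [MeasurableSpace Ω] (μ : Measure Ω) [IsProbabilityMeasure μ]
    (α θ : ℝ) (hα0 : 0 ≤ α) (hα1 : α < 1) (hθ : -α < θ)
    (U : ℕ → Ω → ℝ) (hmeas : ∀ k, Measurable (U k))
    (hindep : iIndepFun U μ)
    (hlaw : ∀ k : ℕ, Measure.map (U k) μ = _root_.betaMeasure (1 - α) (θ + (k + 1) * α))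
    (V : ℕ → Ω → ℝ)
    (hV : ∀ n ω, V n ω = (∏ i ∈ Finset.range n, (1 - U i ω)) * U n ω) :
    ∀ᵐ ω ∂μ, (∀ n, 0 ≤ V n ω) ∧ HasSum (fun n => V n ω) 1 := by
  have ha : (0:ℝ) < 1 - α := by linarith
  have hθα : (0:ℝ) < θ + α := by linarith
  have hb : ∀ k : ℕ, (0:ℝ) < θ + (k + 1) * α := by
    intro k
    have h1 : (1:ℝ) ≤ (k:ℝ) + 1 := by linarith [Nat.cast_nonneg (α := ℝ) k]
    nlinarith [Nat.cast_nonneg (α := ℝ) k]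
  -- a.e. membership of U k in (0,1)
  have hU_ae : ∀ᵐ ω ∂μ, ∀ k, U k ω ∈ Set.Ioo (0:ℝ) 1 := by
    rw [ae_all_iff]
    intro k
    have hz : μ (U k ⁻¹' (Set.Ioo (0:ℝ) 1)ᶜ) = 0 := by
      rw [← Measure.map_apply (hmeas k) measurableSet_Ioo.compl, hlaw k]
      simp only [_root_.betaMeasure]
      rw [withDensity_apply _ measurableSet_Ioo.compl]
      have hcongr : ∀ᵐ x ∂volume, x ∈ (Set.Ioo (0:ℝ) 1)ᶜ →
          ENNReal.ofReal ((Set.Ioo (0:ℝ) 1).indicator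
            (fun x => (Real.Gamma ((1-α) + (θ + (k+1)*α)) /
              (Real.Gamma (1-α) * Real.Gamma (θ + (k+1)*α))) *
              x ^ ((1-α) - 1) * (1 - x) ^ ((θ + (k+1)*α) - 1)) x) = (0:ℝ≥0∞) := by
        refine ae_of_all _ (fun x hx => ?_)
        rw [Set.indicator_of_notMem hx]
        simp
      rw [setLIntegral_congr_fun_ae measurableSet_Ioo.compl hcongr, lintegral_zero]
    have hset : {ω | ¬ U k ω ∈ Set.Ioo (0:ℝ) 1} = U k ⁻¹' (Set.Ioo (0:ℝ) 1)ᶜ := by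
      ext ω; simp
    rw [ae_iff, hset]
    exact hz
  -- expectations
  set m : ℕ → ℝ := fun k => (1 - α) / ((1 - α) + (θ + (k + 1) * α)) with hm_def
  have hm0 : ∀ k, 0 < m k := fun k => div_pos ha (by linarith [hb k])
  have hm1 : ∀ k, m k < 1 := by
    intro k
    rw [hm_def, div_lt_one (by linarith [hb k])]
    linarith [hb k]
  have hEU : ∀ k, ∫ ω, U k ω ∂μ = m k := by
    intro k
    have h1 : ∫ x, x ∂(Measure.map (U k) μ) = ∫ ω, U k ω ∂μ :=
      integral_map (hmeas k).aemeasurable aestronglyMeasurable_id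
    rw [← h1, hlaw k, betaMeasure_integral_id ha (hb k)]
  have hUint : ∀ k, Integrable (U k) μ := by
    intro k
    refine (integrable_const (1:ℝ)).mono' (hmeas k).aestronglyMeasurable ?_
    filter_upwards [hU_ae] with ω hω
    have := hω k
    rw [Real.norm_eq_abs, abs_le]
    constructor <;> [linarith [this.1]; linarith [this.2]]
  -- W and X
  set W : ℕ → Ω → ℝ := fun i ω => 1 - U i ω with hW_def
  have hWmeas : ∀ i, Measurable (W i) := fun i => measurable_const.sub (hmeas i)
  have hWindep : iIndepFun W μ := by
    have := hindep.comp (fun _ => fun x : ℝ => 1 - x)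
      (fun _ => measurable_const.sub measurable_id)
    exact this
  set X : ℕ → Ω → ℝ := fun n ω => ∏ i ∈ Finset.range n, W i ω with hX_def
  have hXmeas : ∀ n, Measurable (X n) := fun n =>
    Finset.measurable_prod _ (fun i _ => hWmeas i)
  have hXbd : ∀ᵐ ω ∂μ, ∀ n, X n ω ∈ Set.Icc (0:ℝ) 1 := by
    filter_upwards [hU_ae] with ω hω n
    constructor
    · exact Finset.prod_nonneg (fun i _ => by
        have h : W i ω = 1 - U i ω := rfl; linarith [(hω i).2])
    · exact Finset.prod_le_one (fun i _ => by
        have h : W i ω = 1 - U i ω := rfl; linarith [(hω i).2])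
        (fun i _ => by
        have h : W i ω = 1 - U i ω := rfl; linarith [(hω i).1])
  have hXint : ∀ n, Integrable (X n) μ := by
    intro n
    refine (integrable_const (1:ℝ)).mono' (hXmeas n).aestronglyMeasurable ?_
    filter_upwards [hXbd] with ω hω
    rw [Real.norm_eq_abs, abs_le]
    exact ⟨by linarith [(hω n).1], (hω n).2⟩
  have hEW : ∀ k, ∫ ω, W k ω ∂μ = 1 - m k := by
    intro k
    rw [hW_def]
    simp only
    rw [integral_sub (integrable_const 1) (hUint k), integral_const, probReal_univ,
      one_smul, hEU]
  have hEX : ∀ n, ∫ ω, X n ω ∂μ = ∏ i ∈ Finset.range n, (1 - m i) := by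
    intro n
    induction n with
    | zero => simp [hX_def]
    | succ n ih =>
      have hip : IndepFun (∏ j ∈ Finset.range n, W j) (W n) μ :=
        hWindep.indepFun_prod_range_succ hWmeas n
      have hprodmeas : Measurable (∏ j ∈ Finset.range n, W j) := by
        have : (∏ j ∈ Finset.range n, W j) = X n := by
          ext ω; rw [Finset.prod_apply]
        rw [this]; exact hXmeas n
      have heq : ∀ ω, X (n+1) ω = (∏ j ∈ Finset.range n, W j) ω * W n ω := by
        intro ω
        rw [Finset.prod_apply, hX_def]
        simp only
        rw [Finset.prod_range_succ]
      calc ∫ ω, X (n+1) ω ∂μ = ∫ ω, (∏ j ∈ Finset.range n, W j) ω * W n ω ∂μ := by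
            exact integral_congr_ae (ae_of_all _ heq)
        _ = (∫ ω, (∏ j ∈ Finset.range n, W j) ω ∂μ) * ∫ ω, W n ω ∂μ :=
            hip.integral_fun_mul_eq_mul_integral hprodmeas.aestronglyMeasurable (hWmeas n).aestronglyMeasurable
        _ = (∫ ω, X n ω ∂μ) * ∫ ω, W n ω ∂μ := by
            congr 1
            exact integral_congr_ae (ae_of_all _ (fun ω => by rw [Finset.prod_apply]))
        _ = ∏ i ∈ Finset.range (n+1), (1 - m i) := by
            rw [ih, hEW, Finset.prod_range_succ]
  -- the product of (1 - m i) tends to 0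
  set c : ℝ := (1 - α) / (1 + θ + α) with hc_def
  have hc : 0 < c := div_pos ha (by linarith)
  have hmc : ∀ i : ℕ, c / (i + 1) ≤ m i := by
    intro i
    have hi0 : (0:ℝ) ≤ (i:ℝ) := Nat.cast_nonneg i
    have hd1 : (0:ℝ) < 1 + θ + (i:ℝ) * α := by nlinarith
    have hd2 : (0:ℝ) < (1 + θ + α) * ((i:ℝ) + 1) := by nlinarith
    have hmi : m i = (1 - α) / (1 + θ + (i:ℝ) * α) := by
      rw [hm_def]; ring_nf
    rw [hmi, hc_def, div_div]
    exact div_le_div_of_nonneg_left (by linarith) hd1 (by nlinarith)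
  have hsum_tend : Tendsto (fun n => ∑ i ∈ Finset.range n, m i) atTop atTop := by
    refine tendsto_atTop_mono (fun n => Finset.sum_le_sum (fun i _ => hmc i)) ?_
    have h1 : Tendsto (fun n => c * ∑ i ∈ Finset.range n, (1:ℝ) / (i + 1)) atTop atTop :=
      Tendsto.const_mul_atTop hc Real.tendsto_sum_range_one_div_nat_succ_atTop
    refine h1.congr (fun n => ?_)
    rw [Finset.mul_sum]
    exact Finset.sum_congr rfl (fun i _ => by rw [mul_one_div])
  have hprod_le : ∀ n, ∏ i ∈ Finset.range n, (1 - m i) ≤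
      Real.exp (-∑ i ∈ Finset.range n, m i) := by
    intro n
    rw [← Finset.sum_neg_distrib, Real.exp_sum]
    exact Finset.prod_le_prod (fun i _ => by linarith [hm1 i])
      (fun i _ => by linarith [Real.add_one_le_exp (-m i)])
  have hprod0 : Tendsto (fun n => ∏ i ∈ Finset.range n, (1 - m i)) atTop (nhds 0) := by
    refine squeeze_zero (fun n => Finset.prod_nonneg (fun i _ => by linarith [hm1 i]))
      hprod_le ?_
    exact Real.tendsto_exp_atBot.comp (tendsto_neg_atTop_atBot.comp hsum_tend)
  have hEXtend : Tendsto (fun n => ∫ ω, X n ω ∂μ) atTop (nhds 0) := by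
    simpa only [hEX] using hprod0
  -- Fatou
  have hXnn : ∀ n, 0 ≤ᵐ[μ] X n := by
    intro n; filter_upwards [hXbd] with ω hω; exact (hω n).1
  have hlin : ∀ n, ∫⁻ ω, ENNReal.ofReal (X n ω) ∂μ = ENNReal.ofReal (∫ ω, X n ω ∂μ) :=
    fun n => (ofReal_integral_eq_lintegral_ofReal (hXint n) (hXnn n)).symm
  have hFatou := lintegral_liminf_le
    (fun n => (ENNReal.measurable_ofReal.comp (hXmeas n)))
    (μ := μ) (u := atTop)
  have hlim2 : Tendsto (fun n => ∫⁻ ω, ENNReal.ofReal (X n ω) ∂μ) atTop (nhds 0) := by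
    simp only [hlin]
    have : Tendsto (fun n => ENNReal.ofReal (∫ ω, X n ω ∂μ)) atTop
        (nhds (ENNReal.ofReal 0)) :=
      (ENNReal.continuous_ofReal.tendsto 0).comp hEXtend
    simpa using this
  have hG0 : ∫⁻ ω, Filter.liminf (fun n => ENNReal.ofReal (X n ω)) atTop ∂μ = 0 := by
    refine le_antisymm ?_ zero_le
    calc ∫⁻ ω, Filter.liminf (fun n => ENNReal.ofReal (X n ω)) atTop ∂μ
        ≤ Filter.liminf (fun n => ∫⁻ ω, ENNReal.ofReal (X n ω) ∂μ) atTop := hFatou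
      _ = 0 := hlim2.liminf_eq
  have hGmeas : Measurable (fun ω => Filter.liminf (fun n => ENNReal.ofReal (X n ω)) atTop) :=
    Measurable.liminf (fun n => ENNReal.measurable_ofReal.comp (hXmeas n))
  have hGae : ∀ᵐ ω ∂μ, Filter.liminf (fun n => ENNReal.ofReal (X n ω)) atTop = 0 := by
    have h := (lintegral_eq_zero_iff hGmeas).mp hG0
    filter_upwards [h] with ω hω
    simpa using hω
  -- conclusion
  filter_upwards [hU_ae, hGae] with ω hω hGω
  have hXnn' : ∀ n, 0 ≤ X n ω := fun n =>
    Finset.prod_nonneg (fun i _ => by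
      have h : W i ω = 1 - U i ω := rfl; linarith [(hω i).2])
  have hanti : Antitone (fun n => X n ω) := by
    refine antitone_nat_of_succ_le (fun n => ?_)
    have : X (n+1) ω = X n ω * W n ω := by
      rw [hX_def]; simp only; rw [Finset.prod_range_succ]
    rw [this]
    have h1 : W n ω ≤ 1 := by rw [hW_def]; simp only; linarith [(hω n).1]
    nlinarith [hXnn' n]
  have hbdd : BddBelow (Set.range (fun n => X n ω)) :=
    ⟨0, fun x ⟨n, hn⟩ => hn ▸ hXnn' n⟩
  have htendL : Tendsto (fun n => X n ω) atTop (nhds (⨅ n, X n ω)) :=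
    tendsto_atTop_ciInf hanti hbdd
  have hLnn : 0 ≤ ⨅ n, X n ω := le_ciInf hXnn'
  have hofReal : Filter.liminf (fun n => ENNReal.ofReal (X n ω)) atTop =
      ENNReal.ofReal (⨅ n, X n ω) :=
    ((ENNReal.continuous_ofReal.tendsto _).comp htendL).liminf_eq
  rw [hofReal] at hGω
  have hL0 : (⨅ n, X n ω) = 0 :=
    le_antisymm (ENNReal.ofReal_eq_zero.mp hGω) hLnn
  have htend0 : Tendsto (fun n => X n ω) atTop (nhds 0) := hL0 ▸ htendL
  have hVnn : ∀ n, 0 ≤ V n ω := by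
    intro n
    rw [hV]
    exact mul_nonneg (hXnn' n) (le_of_lt (hω n).1)
  refine ⟨hVnn, ?_⟩
  have hpartial : ∀ N, ∑ n ∈ Finset.range N, V n ω = 1 - X N ω := by
    intro N
    induction N with
    | zero => simp [hX_def]
    | succ N ih =>
      rw [Finset.sum_range_succ, ih, hV, hX_def]
      simp only
      rw [Finset.prod_range_succ]
      ring_nf
      rw [hW_def]
      ring
  rw [hasSum_iff_tendsto_nat_of_nonneg hVnn]
  simp only [hpartial]
  have : Tendsto (fun N => 1 - X N ω) atTop (nhds (1 - 0)) :=
    tendsto_const_nhds.sub htend0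
  simpa using this
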